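/- Let ℋ be the generic Hecke algebra of a Coxeter system (W,S), J ⊆ S, and let x = Σ_{w∈W} x_w T_w ∈ ℋ (finitely supported). Then x commutes with T_s for all s ∈ J (equivalently, x lies in the centralizer of the parabolic subalgebra ℋ_J) if and only if the coefficients satisfy: (i) x_w = x_{w'} whenever w ≈_J w' (w and w' are in the same J-cyclic-shift class, i.e. related by a length-preserving chain of conjugations by elements of J); and (ii) x_{sws} = b_s x_w − a_s x_{sw} whenever s ∈ J and ℓ(sws) < ℓ(w) (writing w' = sws, so w →^s w' strictly decreases length by 2). -/

import Mathlib

variable {B W : Type*} [Group W] {M : CoxeterMatrix B}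
variable {R : Type*} [CommRing R] {H : Type*} [Ring H] [Algebra R H]

namespace Stmt17Aux

open scoped Classical

variable {B W : Type*} [Group W] {M : CoxeterMatrix B} (cs : CoxeterSystem M W)

local prefix:100 "σ" => cs.simple
local prefix:100 "ℓ" => cs.length
local prefix:100 "π" => cs.wordProd
local prefix:100 "lis" => cs.leftInvSeq

private lemma zmod2_add_self (z c : ZMod 2) : z + c + c = z := by
  rw [add_assoc, CharTwo.add_self_eq_zero, add_zero]

private noncomputable def sigmaFun (i : B) (x : W × ZMod 2) : W × ZMod 2 :=
  (σ i * x.1 * σ i, x.2 + if x.1 = σ i then 1 else 0)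

private lemma conj_eq_simple_iff (i : B) (t : W) : (σ i * t * σ i = σ i) ↔ (t = σ i) := by
  constructor
  · intro h
    have := congrArg (fun y => σ i * y * σ i) h
    simpa [mul_assoc, cs.simple_mul_simple_cancel_left] using this
  · rintro rfl
    simp [cs.simple_mul_simple_self]

private lemma sigmaFun_invol (i : B) (x : W × ZMod 2) :
    sigmaFun cs i (sigmaFun cs i x) = x := by
  obtain ⟨t, z⟩ := x
  simp only [sigmaFun, conj_eq_simple_iff]
  have h1 : σ i * (σ i * t * σ i) * σ i = t := by
    rw [← mul_assoc, ← mul_assoc, cs.simple_mul_simple_self, one_mul,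
      mul_assoc, cs.simple_mul_simple_self, mul_one]
  rw [h1, zmod2_add_self]

/-- The permutation of `W × ZMod 2` attached to a simple reflection. -/
noncomputable def sigma (i : B) : Equiv.Perm (W × ZMod 2) where
  toFun := sigmaFun cs i
  invFun := sigmaFun cs i
  left_inv := sigmaFun_invol cs i
  right_inv := sigmaFun_invol cs i

lemma sigma_apply (i : B) (t : W) (z : ZMod 2) :
    sigma cs i (t, z) = (σ i * t * σ i, z + if t = σ i then 1 else 0) := rfl

section Lift

variable (i j : B)

private lemma simple_conj_zpow (n : ℤ) :
    σ j * (σ i * σ j) ^ n * σ j = (σ i * σ j) ^ (-n) := by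
  have base : σ j * (σ i * σ j) * (σ j)⁻¹ = (σ i * σ j)⁻¹ := by
    rw [mul_inv_rev, cs.inv_simple, cs.inv_simple, ← mul_assoc,
      cs.simple_mul_simple_cancel_right]
  calc σ j * (σ i * σ j) ^ n * σ j
      = σ j * (σ i * σ j) ^ n * (σ j)⁻¹ := by rw [cs.inv_simple]
    _ = (σ j * (σ i * σ j) * (σ j)⁻¹) ^ n := by rw [conj_zpow]
    _ = ((σ i * σ j)⁻¹) ^ n := by rw [base]
    _ = (σ i * σ j) ^ (-n) := by rw [inv_zpow, zpow_neg]

private lemma zpow_mul_simple (n : ℤ) :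
    (σ i * σ j) ^ n * σ j = σ j * (σ i * σ j) ^ (-n) := by
  have := simple_conj_zpow cs i j (-n)
  have h2 := congrArg (fun y => σ j * y * σ j) this
  rw [neg_neg] at h2
  calc (σ i * σ j) ^ n * σ j
      = σ j * (σ j * (σ i * σ j) ^ n * σ j) := by
        rw [← mul_assoc, ← mul_assoc, cs.simple_mul_simple_self, one_mul]
    _ = σ j * (σ i * σ j) ^ (-n) := by rw [simple_conj_zpow]

private lemma conj_eq_refl_iff (k : ℕ) (t : W) (e : ℤ) :
    ((σ i * σ j) ^ k * t * ((σ i * σ j) ^ k)⁻¹ = σ j * (σ i * σ j) ^ e)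
      ↔ (t = σ j * (σ i * σ j) ^ (2 * (k : ℤ) + e)) := by
  have key : (σ i * σ j) ^ (k : ℤ) * (σ j * (σ i * σ j) ^ (2 * (k : ℤ) + e)) *
      ((σ i * σ j) ^ (k : ℤ))⁻¹ = σ j * (σ i * σ j) ^ e := by
    rw [← mul_assoc, zpow_mul_simple, ← zpow_neg, mul_assoc, mul_assoc, ← zpow_add, ← zpow_add]
    congr 1
    ring_nf
  rw [← zpow_natCast (σ i * σ j) k]
  constructor
  · intro h
    have h2 := h.trans key.symm
    have h3 := congrArg (fun y => ((σ i * σ j) ^ (k:ℤ))⁻¹ * y * (σ i * σ j) ^ (k:ℤ)) h2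
    simpa [mul_assoc] using h3
  · rintro rfl
    exact key

private lemma sigma_mul_pow (k : ℕ) (t : W) (z : ZMod 2) :
    (((sigma cs i * sigma cs j) ^ k) (t, z)) =
      ((σ i * σ j) ^ k * t * ((σ i * σ j) ^ k)⁻¹,
        z + ∑ n ∈ Finset.range (2 * k),
          if t = σ j * (σ i * σ j) ^ (n : ℤ) then (1 : ZMod 2) else 0) := by
  induction k with
  | zero => simp
  | succ k ih =>
    rw [pow_succ']
    rw [Equiv.Perm.mul_apply, ih, Equiv.Perm.mul_apply, sigma_apply]
    rw [sigma_apply]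
    have hc1 : ((σ i * σ j) ^ k * t * ((σ i * σ j) ^ k)⁻¹ = σ j)
        ↔ (t = σ j * (σ i * σ j) ^ ((2 * k : ℕ) : ℤ)) := by
      have := conj_eq_refl_iff cs i j k t 0
      rw [zpow_zero, mul_one] at this
      rw [this]
      norm_num
    have hc2 : (σ j * ((σ i * σ j) ^ k * t * ((σ i * σ j) ^ k)⁻¹) * σ j = σ i)
        ↔ (t = σ j * (σ i * σ j) ^ ((2 * k + 1 : ℕ) : ℤ)) := by
      have hstep : (σ j * ((σ i * σ j) ^ k * t * ((σ i * σ j) ^ k)⁻¹) * σ j = σ i)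
          ↔ ((σ i * σ j) ^ k * t * ((σ i * σ j) ^ k)⁻¹ = σ j * σ i * σ j) := by
        constructor
        · intro h
          have := congrArg (fun y => σ j * y * σ j) h
          simpa [mul_assoc, cs.simple_mul_simple_cancel_left,
            cs.simple_mul_simple_cancel_right] using this
        · intro h
          rw [h, ← mul_assoc, ← mul_assoc, cs.simple_mul_simple_self, one_mul,
            mul_assoc, cs.simple_mul_simple_self, mul_one]
      have h1 : σ j * σ i * σ j = σ j * (σ i * σ j) ^ (1 : ℤ) := by
        rw [zpow_one, mul_assoc]
      rw [hstep, h1, conj_eq_refl_iff cs i j k (t := _)]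
      norm_num
    have hconj : σ i * (σ j * ((σ i * σ j) ^ k * t * ((σ i * σ j) ^ k)⁻¹) * σ j) * σ i
        = (σ i * σ j) ^ (k + 1) * t * ((σ i * σ j) ^ (k + 1))⁻¹ := by
      rw [pow_succ']
      rw [mul_inv_rev, mul_inv_rev, cs.inv_simple, cs.inv_simple]
      group
    rw [hconj]
    have hsum : (2 * (k + 1)) = (2 * k) + 1 + 1 := by ring
    rw [hsum, Finset.sum_range_succ, Finset.sum_range_succ]
    refine Prod.ext rfl ?_
    simp only [hc1, hc2]
    push_cast
    ring

private lemma sigma_liftable : M.IsLiftable (fun i => sigma cs i) := by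
  intro i j
  apply Equiv.ext
  rintro ⟨t, z⟩
  rw [Equiv.Perm.one_apply, sigma_mul_pow]
  have hp : (σ i * σ j) ^ (M i j) = 1 := cs.simple_mul_simple_pow i j
  have hzp : ∀ n : ℤ, (σ i * σ j) ^ (n + (M i j : ℤ)) = (σ i * σ j) ^ n := by
    intro n
    rw [zpow_add, zpow_natCast, hp, mul_one]
  rw [hp]
  have hsum : ∑ n ∈ Finset.range (2 * M i j),
      (if t = σ j * (σ i * σ j) ^ (n : ℤ) then (1 : ZMod 2) else 0) = 0 := by
    rcases Nat.eq_zero_or_pos (M i j) with hm | hm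
    · simp [hm]
    apply Finset.sum_involution (g := fun n _ => if n < M i j then n + M i j else n - M i j)
    · intro n hn
      have hiff : (t = σ j * (σ i * σ j) ^ (n : ℤ))
          ↔ (t = σ j * (σ i * σ j) ^ (((if n < M i j then n + M i j else n - M i j) : ℕ) : ℤ)) := by
        by_cases hlt : n < M i j
        · simp only [hlt, if_true]
          push_cast
          rw [hzp]
        · simp only [hlt, if_false]
          rw [Finset.mem_range] at hn
          have hge : M i j ≤ n := Nat.le_of_not_lt hlt
          have : ((n - M i j : ℕ) : ℤ) + (M i j : ℤ) = (n : ℤ) := by omega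
          rw [← hzp (((n - M i j : ℕ) : ℤ)), this]
      by_cases ht : t = σ j * (σ i * σ j) ^ (n : ℤ)
      · rw [if_pos ht, if_pos (hiff.mp ht)]
        exact CharTwo.add_self_eq_zero 1
      · rw [if_neg ht, if_neg (fun h => ht (hiff.mpr h))]
        exact add_zero 0
    · intro n hn _
      rw [Finset.mem_range] at hn
      by_cases hlt : n < M i j <;> simp [hlt] <;> omega
    · intro n hn
      rw [Finset.mem_range] at hn ⊢
      by_cases hlt : n < M i j <;> simp [hlt] <;> omega
    · intro n hn
      rw [Finset.mem_range] at hn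
      by_cases hlt : n < M i j
      · have : ¬ (n + M i j < M i j) := by omega
        simp [hlt, this]
      · have h2 : n - M i j < M i j := by omega
        simp [hlt, h2]
        omega
  rw [hsum, add_zero]
  simp

/-- The permutation representation of `W` on `W × ZMod 2`. -/
noncomputable def permRep : W →* Equiv.Perm (W × ZMod 2) :=
  cs.lift ⟨fun i => sigma cs i, sigma_liftable cs⟩

lemma permRep_simple (i : B) : permRep cs (σ i) = sigma cs i :=
  cs.lift_apply_simple (sigma_liftable cs) i

end Lift

lemma permRep_wordProd (ω : List B) (t : W) (z : ZMod 2) :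
    permRep cs ((π ω)⁻¹) (t, z)
      = ((π ω)⁻¹ * t * (π ω), z + ((lis ω).count t : ZMod 2)) := by
  induction ω generalizing t z with
  | nil => simp
  | cons i ω' ih =>
    rw [cs.wordProd_cons, mul_inv_rev, cs.inv_simple, map_mul, Equiv.Perm.mul_apply,
      permRep_simple, sigma_apply, ih]
    have hcount : (lis (i :: ω')).count t
        = (if t = σ i then 1 else 0) + (lis ω').count (σ i * t * σ i) := by
      show ((σ i :: List.map (MulAut.conj (σ i)) (lis ω')).count t) = _
      rw [List.count_cons]
      have hinj : Function.Injective (MulAut.conj (σ i) : W → W) :=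
        (MulAut.conj (σ i)).injective
      have : t = MulAut.conj (σ i) (σ i * t * σ i) := by
        simp [MulAut.conj_apply, mul_assoc, cs.inv_simple,
          cs.simple_mul_simple_cancel_left, cs.simple_mul_simple_cancel_right]
      rw [this, List.count_map_of_injective _ _ hinj]
      rw [← this]
      by_cases ht : t = σ i
      · simp [ht]
        omega
      · simp [ht]
        exact fun h => ht h.symm
    rw [hcount]
    refine Prod.ext (by simp [mul_assoc]) ?_
    push_cast
    by_cases ht : t = σ i <;> simp [ht] <;> ring

lemma count_lis_parity (ω ω' : List B) (h : π ω = π ω') (t : W) :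
    (((lis ω).count t : ZMod 2)) = (((lis ω').count t : ZMod 2)) := by
  have h1 := permRep_wordProd cs ω t 0
  have h2 := permRep_wordProd cs ω' t 0
  rw [h] at h1
  have h3 := h1.symm.trans h2
  have h4 := congrArg Prod.snd h3
  simpa using h4

/-! ### Strong exchange for simple reflections, and the descent lemma -/

lemma simple_mem_leftInvSeq (ω : List B) (hred : cs.IsReduced ω) (i : B)
    (h : ℓ (σ i * π ω) < ℓ (π ω)) : σ i ∈ lis ω := by
  obtain ⟨ω', hlen', hw'⟩ := cs.exists_reduced_word (σ i * π ω)
  have hπ : π (i :: ω') = π ω := by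
    rw [cs.wordProd_cons, ← hw', ← mul_assoc, cs.simple_mul_simple_self, one_mul]
  have hlen : ℓ (σ i * π ω) + 1 = ℓ (π ω) := by
    rcases cs.length_simple_mul (π ω) i with h' | h'
    · omega
    · exact h'
  have hred'' : cs.IsReduced (i :: ω') := by
    show ℓ (π (i :: ω')) = (i :: ω').length
    rw [hπ, List.length_cons, ← (show ℓ (π ω') = ω'.length from hlen'), ← hw']
    omega
  have hmem : σ i ∈ lis (i :: ω') := by
    show σ i ∈ (σ i :: List.map (MulAut.conj (σ i)) (lis ω'))
    exact List.mem_cons_self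
  have hcount1 : (lis (i :: ω')).count (σ i) = 1 :=
    List.count_eq_one_of_mem hred''.nodup_leftInvSeq hmem
  have hpar := count_lis_parity cs ω (i :: ω') hπ.symm (σ i)
  rw [hcount1] at hpar
  have : (lis ω).count (σ i) ≠ 0 := by
    intro h0
    rw [h0] at hpar
    norm_num at hpar
  exact List.count_pos_iff.mp (Nat.pos_of_ne_zero this)

lemma exchange_left (ω : List B) (hred : cs.IsReduced ω) (i : B)
    (h : ℓ (σ i * π ω) < ℓ (π ω)) :
    ∃ k, k < ω.length ∧ σ i * π ω = π (ω.eraseIdx k) := by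
  have hmem := simple_mem_leftInvSeq cs ω hred i h
  obtain ⟨k, hk, hg⟩ := List.mem_iff_getElem.mp hmem
  have hk' : k < ω.length := by
    rw [cs.length_leftInvSeq] at hk
    exact hk
  refine ⟨k, hk', ?_⟩
  have hgd : (lis ω).getD k 1 = σ i := by
    rw [List.getD_eq_getElem _ 1 hk, hg]
  rw [← hgd]
  exact cs.getD_leftInvSeq_mul_wordProd ω k

private lemma eraseIdx_concat_last {α : Type*} (l : List α) (x : α) :
    (l ++ [x]).eraseIdx l.length = l := by
  rw [List.eraseIdx_eq_take_drop_succ, List.take_append,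
    List.drop_append]
  simp

private lemma eraseIdx_concat_lt {α : Type*} (l : List α) (x : α) (k : ℕ) (h : k < l.length) :
    (l ++ [x]).eraseIdx k = l.eraseIdx k ++ [x] := by
  rw [List.eraseIdx_eq_take_drop_succ, List.eraseIdx_eq_take_drop_succ,
    List.take_append, List.drop_append]
  have h1 : k - l.length = 0 := by omega
  have h2 : k + 1 - l.length = 0 := by omega
  rw [h1, h2]
  simp [List.append_assoc]

lemma descent_lemma (i : B) (w : W) (h1 : ℓ (σ i * w) < ℓ w) (h2 : ℓ (w * σ i) < ℓ w) :
    σ i * w = w * σ i ∨ ℓ (σ i * w * σ i) + 2 ≤ ℓ w := by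
  obtain ⟨ω, hred, rfl⟩ : ∃ ω, cs.IsReduced ω ∧ w = π ω := by
    obtain ⟨ω, hω, hw⟩ := cs.exists_reduced_word' w
    exact ⟨ω, hω, hw⟩
  obtain ⟨k, hk, heq⟩ := exchange_left cs ω hred i h1
  have hρlen : (ω.eraseIdx k).length + 1 = ω.length := List.length_eraseIdx_add_one hk
  have hπ' : π (i :: ω.eraseIdx k) = π ω := by
    rw [cs.wordProd_cons, ← heq, ← mul_assoc, cs.simple_mul_simple_self, one_mul]
  have hred' : cs.IsReduced (i :: ω.eraseIdx k) := by
    show ℓ (π (i :: ω.eraseIdx k)) = (i :: ω.eraseIdx k).length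
    rw [hπ', List.length_cons, hρlen]
    exact hred
  have hredrev : cs.IsReduced (i :: ω.eraseIdx k).reverse :=
    (cs.isReduced_reverse_iff _).mpr hred'
  have hπrev : π ((i :: ω.eraseIdx k).reverse) = (π ω)⁻¹ := by
    rw [cs.wordProd_reverse, hπ']
  have hinvlen : ℓ (σ i * π ((i :: ω.eraseIdx k).reverse))
      < ℓ (π ((i :: ω.eraseIdx k).reverse)) := by
    rw [hπrev]
    have hrw : σ i * (π ω)⁻¹ = (π ω * σ i)⁻¹ := by
      rw [mul_inv_rev, cs.inv_simple]
    rw [hrw, cs.length_inv, cs.length_inv]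
    exact h2
  obtain ⟨k', hk', heq'⟩ := exchange_left cs _ hredrev i hinvlen
  rw [hπrev] at heq'
  have hτ : (i :: ω.eraseIdx k).reverse = (ω.eraseIdx k).reverse ++ [i] := by
    simp
  have hk'' : k' < (ω.eraseIdx k).length + 1 := by
    rw [hτ] at hk'
    simpa using hk'
  rcases Nat.lt_or_ge k' (ω.eraseIdx k).length with hcase | hcase
  · -- k' strictly inside: length drops by 2
    right
    have herase : ((i :: ω.eraseIdx k).reverse).eraseIdx k'
        = (ω.eraseIdx k).reverse.eraseIdx k' ++ [i] := by
      rw [hτ]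
      exact eraseIdx_concat_lt _ i k' (by simpa using hcase)
    rw [herase, cs.wordProd_append, cs.wordProd_singleton] at heq'
    have hkey : σ i * (π ω)⁻¹ * σ i = π ((ω.eraseIdx k).reverse.eraseIdx k') := by
      rw [heq', cs.simple_mul_simple_cancel_right]
    have hlenle : ℓ (σ i * (π ω)⁻¹ * σ i) ≤ (ω.eraseIdx k).length - 1 := by
      rw [hkey]
      calc ℓ (π ((ω.eraseIdx k).reverse.eraseIdx k'))
          ≤ ((ω.eraseIdx k).reverse.eraseIdx k').length := cs.length_wordProd_le _
        _ = (ω.eraseIdx k).length - 1 := by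
            have h5 := List.length_eraseIdx_add_one
              (show k' < (ω.eraseIdx k).reverse.length by simpa using hcase)
            have h6 : ((ω.eraseIdx k).reverse).length = (ω.eraseIdx k).length :=
              List.length_reverse
            omega
    have hinv2 : (σ i * π ω * σ i)⁻¹ = σ i * (π ω)⁻¹ * σ i := by
      rw [mul_inv_rev, mul_inv_rev, cs.inv_simple]
      exact (mul_assoc _ _ _).symm
    have : ℓ (σ i * π ω * σ i) ≤ (ω.eraseIdx k).length - 1 := by
      rw [← cs.length_inv, hinv2]
      exact hlenle
    have hlω : ω.length = ℓ (π ω) := hred.symm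
    omega
  · -- erase the last letter: s i * w = w * s i
    left
    have hkeq : k' = (ω.eraseIdx k).length := by omega
    have herase : ((i :: ω.eraseIdx k).reverse).eraseIdx k' = (ω.eraseIdx k).reverse := by
      rw [hτ, hkeq, ← List.length_reverse]
      exact eraseIdx_concat_last _ i
    rw [herase, cs.wordProd_reverse] at heq'
    -- heq' : σ i * (π ω)⁻¹ = (π (ω.eraseIdx k))⁻¹
    rw [← heq] at heq'
    have := congrArg (fun y => y⁻¹) heq'
    simpa [mul_inv_rev, cs.inv_simple] using this.symm

/-! ### Hecke algebra coefficient computations -/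

section Hecke

variable {R : Type*} [CommRing R] {H : Type*} [Ring H] [Algebra R H]
variable (T : W → H) (bas : Module.Basis W R H) (a b : B → R)

lemma hecke_TT (hbas : ∀ w, bas w = T w)
    (hmul : ∀ v w : W, ℓ (v * w) = ℓ v + ℓ w → T v * T w = T (v * w))
    (hsq : ∀ i, T (σ i) * T (σ i) = a i • T (σ i) + b i • (1 : H))
    (i : B) (w : W) :
    T (σ i) * T w = (if ℓ (σ i * w) = ℓ w + 1 then T (σ i * w)
      else a i • T w + b i • T (σ i * w)) := by
  rcases cs.length_simple_mul w i with hw | hw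
  · rw [if_pos hw]
    apply hmul
    rw [cs.length_simple]
    omega
  · rw [if_neg (by omega)]
    have hww : σ i * (σ i * w) = w := cs.simple_mul_simple_cancel_left i
    have h1 : T (σ i) * T (σ i * w) = T w := by
      have := hmul (σ i) (σ i * w) (by rw [cs.length_simple, hww]; omega)
      rwa [hww] at this
    calc T (σ i) * T w = T (σ i) * (T (σ i) * T (σ i * w)) := by rw [h1]
      _ = (T (σ i) * T (σ i)) * T (σ i * w) := by rw [mul_assoc]
      _ = (a i • T (σ i) + b i • (1 : H)) * T (σ i * w) := by rw [hsq]
      _ = a i • (T (σ i) * T (σ i * w)) + b i • T (σ i * w) := by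
          rw [add_mul, smul_mul_assoc, smul_mul_assoc, one_mul]
      _ = a i • T w + b i • T (σ i * w) := by rw [h1]

lemma hecke_TT_right (hbas : ∀ w, bas w = T w)
    (hmul : ∀ v w : W, ℓ (v * w) = ℓ v + ℓ w → T v * T w = T (v * w))
    (hsq : ∀ i, T (σ i) * T (σ i) = a i • T (σ i) + b i • (1 : H))
    (i : B) (w : W) :
    T w * T (σ i) = (if ℓ (w * σ i) = ℓ w + 1 then T (w * σ i)
      else a i • T w + b i • T (w * σ i)) := by
  rcases cs.length_mul_simple w i with hw | hw
  · rw [if_pos hw]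
    apply hmul
    rw [cs.length_simple]
    omega
  · rw [if_neg (by omega)]
    have hww : w * σ i * σ i = w := cs.simple_mul_simple_cancel_right i
    have h1 : T (w * σ i) * T (σ i) = T w := by
      have := hmul (w * σ i) (σ i) (by rw [cs.length_simple, hww]; omega)
      rwa [hww] at this
    calc T w * T (σ i) = (T (w * σ i) * T (σ i)) * T (σ i) := by rw [h1]
      _ = T (w * σ i) * (T (σ i) * T (σ i)) := by rw [mul_assoc]
      _ = T (w * σ i) * (a i • T (σ i) + b i • (1 : H)) := by rw [hsq]
      _ = a i • (T (w * σ i) * T (σ i)) + b i • T (w * σ i) := by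
          rw [mul_add, mul_smul_comm, mul_smul_comm, mul_one]
      _ = a i • T w + b i • T (w * σ i) := by rw [h1]

lemma hecke_repr_delta (hbas : ∀ w, bas w = T w) (v w : W) :
    bas.repr (T w) v = if w = v then 1 else 0 := by
  rw [← hbas, bas.repr_self, Finsupp.single_apply]

lemma repr_simple_mul (hbas : ∀ w, bas w = T w)
    (hmul : ∀ v w : W, ℓ (v * w) = ℓ v + ℓ w → T v * T w = T (v * w))
    (hsq : ∀ i, T (σ i) * T (σ i) = a i • T (σ i) + b i • (1 : H))
    (i : B) (u : W) (x : H) :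
    bas.repr (T (σ i) * x) u =
      (if ℓ (σ i * u) < ℓ u
       then bas.repr x (σ i * u) + a i * bas.repr x u
       else b i * bas.repr x (σ i * u)) := by
  classical
  by_cases hc : ℓ (σ i * u) < ℓ u
  · rw [if_pos hc]
    have hFG : (Finsupp.lapply u ∘ₗ (bas.repr : H →ₗ[R] (W →₀ R)) ∘ₗ
          LinearMap.mulLeft R (T (σ i)))
        = (Finsupp.lapply (σ i * u) ∘ₗ (bas.repr : H →ₗ[R] (W →₀ R))
            + a i • (Finsupp.lapply u ∘ₗ (bas.repr : H →ₗ[R] (W →₀ R)))) := by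
      apply bas.ext
      intro w
      simp only [LinearMap.comp_apply, LinearMap.mulLeft_apply, Finsupp.lapply_apply,
        LinearMap.add_apply, LinearMap.smul_apply, smul_eq_mul, LinearEquiv.coe_coe]
      rw [hbas w, hecke_TT cs T bas a b hbas hmul hsq i w]
      rcases cs.length_simple_mul w i with hw | hw
      · rw [if_pos hw]
        rw [hecke_repr_delta T bas hbas, hecke_repr_delta T bas hbas,
          hecke_repr_delta T bas hbas]
        by_cases h1 : w = σ i * u
        · have h2 : σ i * w = u := by rw [h1, cs.simple_mul_simple_cancel_left]
          have h3 : ¬ (w = u) := by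
            intro h4
            rw [h4] at hw
            omega
          rw [if_pos h2, if_pos h1, if_neg h3]
          ring
        · have h2 : ¬ (σ i * w = u) := by
            intro h4
            apply h1
            rw [← h4, cs.simple_mul_simple_cancel_left]
          have h3 : ¬ (w = u) := by
            intro h4
            rw [h4] at hw
            omega
          rw [if_neg h2, if_neg h1, if_neg h3]
          ring
      · rw [if_neg (by omega)]
        rw [map_add, map_smul, map_smul]
        simp only [Finsupp.coe_add, Finsupp.coe_smul, Pi.add_apply, Pi.smul_apply, smul_eq_mul]
        rw [hecke_repr_delta T bas hbas, hecke_repr_delta T bas hbas,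
          hecke_repr_delta T bas hbas]
        have h2 : ¬ (σ i * w = u) := by
          intro h4
          have h5 : w = σ i * u := by rw [← h4, cs.simple_mul_simple_cancel_left]
          rw [h5, cs.simple_mul_simple_cancel_left] at hw
          omega
        have h1 : ¬ (w = σ i * u) := by
          intro h4
          apply h2
          rw [h4, cs.simple_mul_simple_cancel_left]
        rw [if_neg h2, if_neg h1]
        by_cases h3 : w = u
        · rw [if_pos h3]; ring
        · rw [if_neg h3]; ring
    have := congrArg (fun f : H →ₗ[R] R => f x) hFG
    simpa using this
  · rw [if_neg hc]
    have hFG : (Finsupp.lapply u ∘ₗ (bas.repr : H →ₗ[R] (W →₀ R)) ∘ₗ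
          LinearMap.mulLeft R (T (σ i)))
        = b i • (Finsupp.lapply (σ i * u) ∘ₗ (bas.repr : H →ₗ[R] (W →₀ R))) := by
      apply bas.ext
      intro w
      simp only [LinearMap.comp_apply, LinearMap.mulLeft_apply, Finsupp.lapply_apply,
        LinearMap.smul_apply, smul_eq_mul, LinearEquiv.coe_coe]
      rw [hbas w, hecke_TT cs T bas a b hbas hmul hsq i w]
      rcases cs.length_simple_mul w i with hw | hw
      · rw [if_pos hw]
        rw [hecke_repr_delta T bas hbas, hecke_repr_delta T bas hbas]
        have h2 : ¬ (σ i * w = u) := by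
          intro h4
          have h5 : σ i * u = w := by rw [← h4, cs.simple_mul_simple_cancel_left]
          rw [← h5, cs.simple_mul_simple_cancel_left] at hw
          omega
        have h1 : ¬ (w = σ i * u) := by
          intro h4
          apply h2
          rw [h4, cs.simple_mul_simple_cancel_left]
        rw [if_neg h2, if_neg h1]
        ring
      · rw [if_neg (by omega)]
        rw [map_add, map_smul, map_smul]
        simp only [Finsupp.coe_add, Finsupp.coe_smul, Pi.add_apply, Pi.smul_apply, smul_eq_mul]
        rw [hecke_repr_delta T bas hbas, hecke_repr_delta T bas hbas,
          hecke_repr_delta T bas hbas]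
        have h3 : ¬ (w = u) := by
          intro h4
          rw [h4] at hw
          omega
        have h12 : (σ i * w = u) ↔ (w = σ i * u) := by
          constructor
          · intro h4
            rw [← h4, cs.simple_mul_simple_cancel_left]
          · intro h4
            rw [h4, cs.simple_mul_simple_cancel_left]
        rw [if_neg h3]
        by_cases h4 : σ i * w = u
        · rw [if_pos h4, if_pos (h12.mp h4)]
          ring
        · rw [if_neg h4, if_neg (fun h => h4 (h12.mpr h))]
          ring
    have := congrArg (fun f : H →ₗ[R] R => f x) hFG
    simpa using this

lemma repr_mul_simple (hbas : ∀ w, bas w = T w)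
    (hmul : ∀ v w : W, ℓ (v * w) = ℓ v + ℓ w → T v * T w = T (v * w))
    (hsq : ∀ i, T (σ i) * T (σ i) = a i • T (σ i) + b i • (1 : H))
    (i : B) (u : W) (x : H) :
    bas.repr (x * T (σ i)) u =
      (if ℓ (u * σ i) < ℓ u
       then bas.repr x (u * σ i) + a i * bas.repr x u
       else b i * bas.repr x (u * σ i)) := by
  classical
  by_cases hc : ℓ (u * σ i) < ℓ u
  · rw [if_pos hc]
    have hFG : (Finsupp.lapply u ∘ₗ (bas.repr : H →ₗ[R] (W →₀ R)) ∘ₗ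
          LinearMap.mulRight R (T (σ i)))
        = (Finsupp.lapply (u * σ i) ∘ₗ (bas.repr : H →ₗ[R] (W →₀ R))
            + a i • (Finsupp.lapply u ∘ₗ (bas.repr : H →ₗ[R] (W →₀ R)))) := by
      apply bas.ext
      intro w
      simp only [LinearMap.comp_apply, LinearMap.mulRight_apply, Finsupp.lapply_apply,
        LinearMap.add_apply, LinearMap.smul_apply, smul_eq_mul, LinearEquiv.coe_coe]
      rw [hbas w, hecke_TT_right cs T bas a b hbas hmul hsq i w]
      rcases cs.length_mul_simple w i with hw | hw
      · rw [if_pos hw]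
        rw [hecke_repr_delta T bas hbas, hecke_repr_delta T bas hbas,
          hecke_repr_delta T bas hbas]
        by_cases h1 : w = u * σ i
        · have h2 : w * σ i = u := by rw [h1, cs.simple_mul_simple_cancel_right]
          have h3 : ¬ (w = u) := by
            intro h4
            rw [h4] at hw
            omega
          rw [if_pos h2, if_pos h1, if_neg h3]
          ring
        · have h2 : ¬ (w * σ i = u) := by
            intro h4
            apply h1
            rw [← h4, cs.simple_mul_simple_cancel_right]
          have h3 : ¬ (w = u) := by
            intro h4
            rw [h4] at hw
            omega
          rw [if_neg h2, if_neg h1, if_neg h3]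
          ring
      · rw [if_neg (by omega)]
        rw [map_add, map_smul, map_smul]
        simp only [Finsupp.coe_add, Finsupp.coe_smul, Pi.add_apply, Pi.smul_apply, smul_eq_mul]
        rw [hecke_repr_delta T bas hbas, hecke_repr_delta T bas hbas,
          hecke_repr_delta T bas hbas]
        have h2 : ¬ (w * σ i = u) := by
          intro h4
          have h5 : w = u * σ i := by rw [← h4, cs.simple_mul_simple_cancel_right]
          rw [h5, cs.simple_mul_simple_cancel_right] at hw
          omega
        have h1 : ¬ (w = u * σ i) := by
          intro h4
          apply h2
          rw [h4, cs.simple_mul_simple_cancel_right]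
        rw [if_neg h2, if_neg h1]
        by_cases h3 : w = u
        · rw [if_pos h3]; ring
        · rw [if_neg h3]; ring
    have := congrArg (fun f : H →ₗ[R] R => f x) hFG
    simpa using this
  · rw [if_neg hc]
    have hFG : (Finsupp.lapply u ∘ₗ (bas.repr : H →ₗ[R] (W →₀ R)) ∘ₗ
          LinearMap.mulRight R (T (σ i)))
        = b i • (Finsupp.lapply (u * σ i) ∘ₗ (bas.repr : H →ₗ[R] (W →₀ R))) := by
      apply bas.ext
      intro w
      simp only [LinearMap.comp_apply, LinearMap.mulRight_apply, Finsupp.lapply_apply,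
        LinearMap.smul_apply, smul_eq_mul, LinearEquiv.coe_coe]
      rw [hbas w, hecke_TT_right cs T bas a b hbas hmul hsq i w]
      rcases cs.length_mul_simple w i with hw | hw
      · rw [if_pos hw]
        rw [hecke_repr_delta T bas hbas, hecke_repr_delta T bas hbas]
        have h2 : ¬ (w * σ i = u) := by
          intro h4
          have h5 : u * σ i = w := by rw [← h4, cs.simple_mul_simple_cancel_right]
          rw [← h5, cs.simple_mul_simple_cancel_right] at hw
          omega
        have h1 : ¬ (w = u * σ i) := by
          intro h4
          apply h2
          rw [h4, cs.simple_mul_simple_cancel_right]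
        rw [if_neg h2, if_neg h1]
        ring
      · rw [if_neg (by omega)]
        rw [map_add, map_smul, map_smul]
        simp only [Finsupp.coe_add, Finsupp.coe_smul, Pi.add_apply, Pi.smul_apply, smul_eq_mul]
        rw [hecke_repr_delta T bas hbas, hecke_repr_delta T bas hbas,
          hecke_repr_delta T bas hbas]
        have h3 : ¬ (w = u) := by
          intro h4
          rw [h4] at hw
          omega
        have h12 : (w * σ i = u) ↔ (w = u * σ i) := by
          constructor
          · intro h4
            rw [← h4, cs.simple_mul_simple_cancel_right]
          · intro h4
            rw [h4, cs.simple_mul_simple_cancel_right]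
        rw [if_neg h3]
        by_cases h4 : w * σ i = u
        · rw [if_pos h4, if_pos (h12.mp h4)]
          ring
        · rw [if_neg h4, if_neg (fun h => h4 (h12.mpr h))]
          ring
    have := congrArg (fun f : H →ₗ[R] R => f x) hFG
    simpa using this

end Hecke

end Stmt17Aux



/-- One elementary cyclic-shift step: conjugation by a generator in `J`
that does not increase length. -/
def cyclicShiftStep (cs : CoxeterSystem M W) (J : Set B) (u u' : W) : Prop :=
  ∃ i ∈ J, u' = cs.simple i * u * cs.simple i ∧ cs.length u' ≤ cs.length u

/-- `w ≈_J w'`: a length-preserving chain of cyclic-shift steps with generators in `J`. -/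
def cyclicShiftEquiv (cs : CoxeterSystem M W) (J : Set B) (w w' : W) : Prop :=
  Relation.ReflTransGen (cyclicShiftStep cs J) w w' ∧ cs.length w = cs.length w'

/-- an element `x = Σ x_w T_w` of the generic Hecke algebra commutes with
all `T_s`, `s ∈ J` (equivalently lies in the centralizer of `ℋ_J`) iff
(i) `x_w = x_{w'}` whenever `w ≈_J w'`, and
(ii) `x_{sws} = b_s x_w − a_s x_{sw}` whenever `s ∈ J` and `ℓ(sws) < ℓ(w)`. -/
theorem stmt17 (cs : CoxeterSystem M W) (J : Set B)
    (T : W → H) (bas : Module.Basis W R H) (hbas : ∀ w, bas w = T w)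
    (a b : B → R)
    (hpar : ∀ i j, IsConj (cs.simple i) (cs.simple j) → a i = a j ∧ b i = b j)
    (hone : T 1 = 1)
    (hmul : ∀ v w : W, cs.length (v * w) = cs.length v + cs.length w →
      T v * T w = T (v * w))
    (hsq : ∀ i, T (cs.simple i) * T (cs.simple i)
      = a i • T (cs.simple i) + b i • (1 : H))
    (x : H) :
    (∀ i ∈ J, T (cs.simple i) * x = x * T (cs.simple i)) ↔
      ((∀ w w' : W, cyclicShiftEquiv cs J w w' → bas.repr x w = bas.repr x w') ∧
        (∀ i ∈ J, ∀ w : W, cs.length (cs.simple i * w * cs.simple i) < cs.length w →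
          bas.repr x (cs.simple i * w * cs.simple i)
            = b i * bas.repr x w - a i * bas.repr x (cs.simple i * w))) := by
  classical
  have keyL := Stmt17Aux.repr_simple_mul cs T bas a b hbas hmul hsq
  have keyR := Stmt17Aux.repr_mul_simple cs T bas a b hbas hmul hsq
  constructor
  · intro hcomm
    have hCeq : ∀ i ∈ J, ∀ u : W,
        (if cs.length (cs.simple i * u) < cs.length u
         then bas.repr x (cs.simple i * u) + a i * bas.repr x u
         else b i * bas.repr x (cs.simple i * u)) =
        (if cs.length (u * cs.simple i) < cs.length u
         then bas.repr x (u * cs.simple i) + a i * bas.repr x u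
         else b i * bas.repr x (u * cs.simple i)) := by
      intro i hi u
      rw [← keyL i u x, ← keyR i u x, hcomm i hi]
    have hstep : ∀ i ∈ J, ∀ w : W,
        cs.length (cs.simple i * w * cs.simple i) = cs.length w →
        bas.repr x w = bas.repr x (cs.simple i * w * cs.simple i) := by
      intro i hi w hlen
      rcases cs.length_simple_mul w i with hsw | hsw
      · have h := hCeq i hi (cs.simple i * w)
        have e1 : cs.simple i * (cs.simple i * w) = w :=
          cs.simple_mul_simple_cancel_left i
        rw [e1] at h
        rw [if_pos (by omega), if_pos (by omega)] at h
        exact add_right_cancel h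
      · rcases cs.length_mul_simple w i with hws | hws
        · have h := hCeq i hi (w * cs.simple i)
          have e1 : w * cs.simple i * cs.simple i = w :=
            cs.simple_mul_simple_cancel_right i
          have e2 : cs.simple i * (w * cs.simple i) = cs.simple i * w * cs.simple i :=
            (mul_assoc _ _ _).symm
          rw [e2, e1] at h
          rw [if_pos (by omega), if_pos (by omega)] at h
          exact (add_right_cancel h).symm
        · rcases Stmt17Aux.descent_lemma cs i w (by omega) (by omega) with hcom | hbad
          · have hfix : cs.simple i * w * cs.simple i = w := by
              rw [hcom, cs.simple_mul_simple_cancel_right]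
            rw [hfix]
          · omega
    constructor
    · rintro w w' ⟨hchain, hlen⟩
      have main : ∀ v : W, Relation.ReflTransGen (cyclicShiftStep cs J) w v →
          cs.length v ≤ cs.length w ∧
            (cs.length v = cs.length w → bas.repr x w = bas.repr x v) := by
        intro v h
        induction h with
        | refl => exact ⟨le_rfl, fun _ => rfl⟩
        | tail hab hbc ih =>
          obtain ⟨i, hiJ, hceq, hle⟩ := hbc
          subst hceq
          refine ⟨le_trans hle ih.1, fun hl => ?_⟩
          have hlb : cs.length _ = cs.length w := le_antisymm ih.1 (by omega)
          exact (ih.2 hlb).trans (hstep i hiJ _ (by omega))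
      exact (main w' hchain).2 hlen.symm
    · intro i hiJ w hlt
      have d1 := cs.length_simple_mul w i
      have d2 := cs.length_mul_simple (cs.simple i * w) i
      have h := hCeq i hiJ (cs.simple i * w)
      have e1 : cs.simple i * (cs.simple i * w) = w :=
        cs.simple_mul_simple_cancel_left i
      rw [e1] at h
      rw [if_neg (by omega), if_pos (by omega)] at h
      exact eq_sub_of_add_eq h.symm
  · rintro ⟨hEq, hDesc⟩ i hiJ
    apply bas.repr.injective
    ext u
    rw [keyL i u x, keyR i u x]
    rcases cs.length_simple_mul u i with hsu | hsu <;>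
      rcases cs.length_mul_simple u i with hus | hus
    · -- both ascents
      rw [if_neg (by omega), if_neg (by omega)]
      have hequiv : cyclicShiftEquiv cs J (cs.simple i * u) (u * cs.simple i) := by
        refine ⟨Relation.ReflTransGen.single ⟨i, hiJ, ?_, ?_⟩, ?_⟩
        · rw [cs.simple_mul_simple_cancel_left]
        · omega
        · omega
      rw [hEq _ _ hequiv]
    · -- ℓ(su) > ℓ u > ℓ(us) : case D
      rw [if_neg (by omega), if_pos (by omega)]
      have h := hDesc i hiJ (cs.simple i * u)
        (by rw [cs.simple_mul_simple_cancel_left]; omega)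
      rw [cs.simple_mul_simple_cancel_left] at h
      rw [h]
      ring
    · -- ℓ(su) < ℓ u < ℓ(us) : case C
      rw [if_pos (by omega), if_neg (by omega)]
      have h := hDesc i hiJ (u * cs.simple i)
        (by rw [← mul_assoc, cs.simple_mul_simple_cancel_right]; omega)
      rw [← mul_assoc, cs.simple_mul_simple_cancel_right] at h
      have d3 := cs.length_mul_simple (cs.simple i * u) i
      have d4 := cs.length_simple_mul (u * cs.simple i) i
      rw [← mul_assoc] at d4
      have hequiv : cyclicShiftEquiv cs J u (cs.simple i * u * cs.simple i) := by
        refine ⟨Relation.ReflTransGen.single ⟨i, hiJ, rfl, by omega⟩, by omega⟩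
      rw [h, ← hEq _ _ hequiv]
      ring
    · -- both descents : case A
      rw [if_pos (by omega), if_pos (by omega)]
      have hequiv : cyclicShiftEquiv cs J (cs.simple i * u) (u * cs.simple i) := by
        refine ⟨Relation.ReflTransGen.single ⟨i, hiJ, ?_, ?_⟩, ?_⟩
        · rw [cs.simple_mul_simple_cancel_left]
        · omega
        · omega
      rw [hEq _ _ hequiv]
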